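/- arXiv:1406.3946 — 2 statements merged into one kernel-verified Lean document; each statement's English description precedes it below -/
import Mathlib

section
/- Let X be a complex Hilbert space and A ∈ L(X) generate a strongly stable discrete semigroup (A^n x → 0 for all x). Then every spectral point of A on the unit circle belongs to the continuous spectrum: σ(A) ∩ 𝕋 ⊆ σ_c(A). -/
open Filter Topology

/-- For a strongly stable operator on a Hilbert space, every spectral point on the
unit circle belongs to the continuous spectrum. -/
theorem stmt4 {X : Type*} [NormedAddCommGroup X] [InnerProductSpace ℂ X] [CompleteSpace X]
    (A : X →L[ℂ] X)
    (hstab : ∀ x : X, Tendsto (fun n : ℕ => ‖(A ^ n) x‖) atTop (𝓝 0)) :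
    ∀ z : ℂ, ‖z‖ = 1 → z ∈ spectrum ℂ A →
      Function.Injective ⇑(z • (1 : X →L[ℂ] X) - A) ∧
      Dense (Set.range ⇑(z • (1 : X →L[ℂ] X) - A)) ∧
      ¬ Function.Surjective ⇑(z • (1 : X →L[ℂ] X) - A) := by
  intro z hz hspec
  set T : X →L[ℂ] X := z • (1 : X →L[ℂ] X) - A with hT
  -- Injectivity: an eigenvector for unimodular z contradicts stability
  have hker : ∀ x : X, T x = 0 → x = 0 := by
    intro x hx
    have hAx : A x = z • x := by
      have : z • x - A x = 0 := by simpa [hT] using hx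
      have := sub_eq_zero.mp this
      exact this.symm
    have hpow : ∀ n : ℕ, (A ^ n) x = z ^ n • x := by
      intro n
      induction n with
      | zero => simp
      | succ n ih =>
        rw [pow_succ, ContinuousLinearMap.mul_apply, hAx, map_smul, ih, smul_smul,
          ← pow_succ']
    have hnorm : ∀ n : ℕ, ‖(A ^ n) x‖ = ‖x‖ := by
      intro n
      rw [hpow n, norm_smul, norm_pow]
      simp [hz]
    have : Tendsto (fun _ : ℕ => ‖x‖) atTop (𝓝 0) := by
      simpa only [hnorm] using hstab x
    have hx0 : ‖x‖ = 0 := tendsto_nhds_unique tendsto_const_nhds this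
    exact norm_eq_zero.mp hx0
  have hinj : Function.Injective ⇑T := by
    intro a b hab
    have : T (a - b) = 0 := by rw [map_sub, hab, sub_self]
    have := hker _ this
    exact sub_eq_zero.mp this
  refine ⟨hinj, ?_, ?_⟩
  · -- Dense range: the orthogonal complement of the range is trivial
    have hortho : (LinearMap.range (T : X →ₗ[ℂ] X))ᗮ = ⊥ := by
      rw [Submodule.eq_bot_iff]
      intro x hx
      have hxy : ∀ y : X, inner ℂ (A y) x = (starRingEnd ℂ) z * inner ℂ y x := by
        intro y
        have h0 : (inner ℂ (T y) x : ℂ) = 0 := hx _ ⟨y, rfl⟩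
        have : (inner ℂ (z • y - A y) x : ℂ) = 0 := by
          simpa [hT] using h0
        rw [inner_sub_left, inner_smul_left, sub_eq_zero] at this
        exact this.symm
      have hpow : ∀ (n : ℕ) (y : X),
          (inner ℂ ((A ^ n) y) x : ℂ) = ((starRingEnd ℂ) z) ^ n * inner ℂ y x := by
        intro n
        induction n with
        | zero => intro y; simp
        | succ n ih =>
          intro y
          rw [pow_succ', ContinuousLinearMap.mul_apply, hxy ((A ^ n) y), ih y,
            ← mul_assoc, ← pow_succ']
      have hyx : ∀ y : X, (inner ℂ y x : ℂ) = 0 := by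
        intro y
        have h1 : Tendsto (fun n : ℕ => ‖(inner ℂ ((A ^ n) y) x : ℂ)‖) atTop (𝓝 0) := by
          have hb : ∀ n : ℕ, ‖(inner ℂ ((A ^ n) y) x : ℂ)‖ ≤ ‖(A ^ n) y‖ * ‖x‖ :=
            fun n => norm_inner_le_norm _ _
          have h2 : Tendsto (fun n : ℕ => ‖(A ^ n) y‖ * ‖x‖) atTop (𝓝 0) := by
            simpa using (hstab y).mul_const ‖x‖
          exact squeeze_zero (fun n => norm_nonneg _) hb h2
        have hconst : ∀ n : ℕ, ‖(inner ℂ ((A ^ n) y) x : ℂ)‖ = ‖(inner ℂ y x : ℂ)‖ := by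
          intro n
          rw [hpow n y, norm_mul, norm_pow]
          simp [hz]
        have : Tendsto (fun _ : ℕ => ‖(inner ℂ y x : ℂ)‖) atTop (𝓝 0) := by
          simpa only [hconst] using h1
        have := tendsto_nhds_unique tendsto_const_nhds this
        exact norm_eq_zero.mp this
      have := hyx x
      rwa [inner_self_eq_zero] at this
    have htop : (LinearMap.range (T : X →ₗ[ℂ] X)).topologicalClosure = ⊤ := by
      rw [Submodule.topologicalClosure_eq_top_iff]
      exact hortho
    have : Dense ((LinearMap.range (T : X →ₗ[ℂ] X) : Submodule ℂ X) : Set X) :=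
      Submodule.dense_iff_topologicalClosure_eq_top.mpr htop
    simpa [LinearMap.coe_range] using this
  · -- Not surjective: otherwise T would be invertible, contradicting z ∈ spectrum
    intro hsurj
    have hbij : Function.Bijective ⇑T := ⟨hinj, hsurj⟩
    have hunit : IsUnit T := ContinuousLinearMap.isUnit_iff_bijective.mpr hbij
    have : ¬ IsUnit (algebraMap ℂ (X →L[ℂ] X) z - A) := spectrum.mem_iff.mp hspec
    apply this
    simpa [hT, Algebra.algebraMap_eq_smul_one] using hunit
end

section
/- Let X be a complex Banach space, A ∈ L(X) power bounded with M = sup_n ‖A^n‖, and suppose that for some φ_k ∈ ℝ, α ≥ 1, M_A ≥ 1, and ε_A ∈ (0, π/8], we have e^{iφ} ∈ ρ(A) and |φ - φ_k|^α ‖R(e^{iφ},A)‖ ≤ M_A whenever 0 < |φ - φ_k| ≤ ε_A. Then for every λ = re^{iφ} with 1 ≤ r ≤ 2, 0 < |φ - φ_k| ≤ ε_A (and λ ≠ e^{iφ_k}), λ ∈ ρ(A) and |λ - e^{iφ_k}|^α ‖R(λ,A)‖ ≤ 2^α (M + M_A(1 + M)). -/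
open Complex

private lemma chord_aux (x : ℝ) : ‖Complex.exp (x * Complex.I) - 1‖ ≤ |x| := by
  have hre : (Complex.exp ((x : ℂ) * Complex.I) - 1).re = Real.cos x - 1 := by
    simp [Complex.exp_ofReal_mul_I_re]
  have him : (Complex.exp ((x : ℂ) * Complex.I) - 1).im = Real.sin x := by
    simp [Complex.exp_ofReal_mul_I_im]
  rw [Complex.norm_def, Complex.normSq_apply, hre, him,
    show |x| = Real.sqrt (x ^ 2) by rw [Real.sqrt_sq_eq_abs]]
  apply Real.sqrt_le_sqrt
  nlinarith [Real.sin_sq_add_cos_sq x, Real.one_sub_sq_div_two_le_cos (x := x)]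

private lemma chord (x y : ℝ) :
    ‖Complex.exp ((x : ℂ) * Complex.I) - Complex.exp ((y : ℂ) * Complex.I)‖
      ≤ |x - y| := by
  have h2 : Complex.exp ((y : ℂ) * Complex.I) * Complex.exp (((x - y : ℝ) : ℂ) * Complex.I)
      = Complex.exp ((x : ℂ) * Complex.I) := by
    rw [← Complex.exp_add]; congr 1; push_cast; ring
  have h : Complex.exp ((x : ℂ) * Complex.I) - Complex.exp ((y : ℂ) * Complex.I)
      = Complex.exp ((y : ℂ) * Complex.I)
        * (Complex.exp (((x - y : ℝ) : ℂ) * Complex.I) - 1) := by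
    rw [mul_sub, mul_one, h2]
  rw [h, norm_mul, Complex.norm_exp_ofReal_mul_I, one_mul]
  exact chord_aux _

/-- Neumann series: points of modulus `> 1` lie in the resolvent set of a power-bounded
operator, with the strong Kreiss estimate. -/
private lemma neumann {X : Type*} [NormedAddCommGroup X] [NormedSpace ℂ X] [CompleteSpace X]
    (A : X →L[ℂ] X) (M : ℝ) (hM : ∀ n : ℕ, ‖A ^ n‖ ≤ M) (lam : ℂ)
    (hl : 1 < ‖lam‖) :
    ∃ R : X →L[ℂ] X, R * (lam • (1 : X →L[ℂ] X) - A) = 1 ∧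
      (lam • (1 : X →L[ℂ] X) - A) * R = 1 ∧ (‖lam‖ - 1) * ‖R‖ ≤ M := by
  set a : ℝ := ‖lam‖ with ha
  have ha1 : 1 < a := hl
  have ha0 : (0 : ℝ) < a := by linarith
  have hlne : lam ≠ 0 := by
    intro h
    rw [ha, h, norm_zero] at ha0
    exact lt_irrefl _ ha0
  have hq0 : (0 : ℝ) ≤ a⁻¹ := by positivity
  have hq : a⁻¹ < 1 := inv_lt_one_of_one_lt₀ ha1
  set B : X →L[ℂ] X := lam⁻¹ • A with hB
  have hBn : ∀ n : ℕ, ‖B ^ n‖ ≤ M * a⁻¹ ^ n := by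
    intro n
    have h1 : B ^ n = (lam⁻¹) ^ n • A ^ n := smul_pow _ _ _
    rw [h1, norm_smul (lam⁻¹ ^ n) (A ^ n), norm_pow, norm_inv, ← ha]
    calc a⁻¹ ^ n * ‖A ^ n‖ ≤ a⁻¹ ^ n * M :=
          mul_le_mul_of_nonneg_left (hM n) (by positivity)
      _ = M * a⁻¹ ^ n := mul_comm _ _
  have hgeo : Summable fun n : ℕ => M * a⁻¹ ^ n :=
    (summable_geometric_of_lt_one hq0 hq).mul_left M
  have hsumnorm : Summable fun n : ℕ => ‖B ^ n‖ :=
    Summable.of_nonneg_of_le (fun n => norm_nonneg _) hBn hgeo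
  have hsum : Summable fun n : ℕ => B ^ n := hsumnorm.of_norm
  set S : X →L[ℂ] X := ∑' n : ℕ, B ^ n with hS
  have hS1 : ∑' n : ℕ, B ^ (n + 1) = S - 1 := by
    have h := Summable.tsum_eq_zero_add hsum
    rw [pow_zero] at h
    rw [hS, h]; abel
  have hmulr : S * (1 - B) = 1 := by
    have h1 : S * B = ∑' n : ℕ, B ^ n * B := (hsum.tsum_mul_right B).symm
    have h2 : (∑' n : ℕ, B ^ n * B) = ∑' n : ℕ, B ^ (n + 1) := by
      simp [pow_succ]
    rw [mul_sub, mul_one, h1, h2, hS1]; abel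
  have hmull : (1 - B) * S = 1 := by
    have h1 : B * S = ∑' n : ℕ, B * B ^ n := (hsum.tsum_mul_left B).symm
    have h2 : (∑' n : ℕ, B * B ^ n) = ∑' n : ℕ, B ^ (n + 1) := by
      simp [pow_succ']
    rw [sub_mul, one_mul, h1, h2, hS1]; abel
  have hfact : lam • (1 : X →L[ℂ] X) - A = lam • ((1 : X →L[ℂ] X) - B) := by
    rw [smul_sub, hB, smul_smul, mul_inv_cancel₀ hlne, one_smul]
  refine ⟨lam⁻¹ • S, ?_, ?_, ?_⟩
  · rw [hfact, smul_mul_assoc, mul_smul_comm, smul_smul, inv_mul_cancel₀ hlne, one_smul, hmulr]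
  · rw [hfact, smul_mul_assoc, mul_smul_comm, smul_smul, mul_inv_cancel₀ hlne, one_smul, hmull]
  · have hSnorm : ‖S‖ ≤ M * (1 - a⁻¹)⁻¹ := by
      calc ‖S‖ ≤ ∑' n : ℕ, ‖B ^ n‖ := norm_tsum_le_tsum_norm hsumnorm
        _ ≤ ∑' n : ℕ, M * a⁻¹ ^ n := Summable.tsum_le_tsum hBn hsumnorm hgeo
        _ = M * (1 - a⁻¹)⁻¹ := by
            rw [tsum_mul_left, tsum_geometric_of_lt_one hq0 hq]
    have hRn : ‖lam⁻¹ • S‖ ≤ a⁻¹ * (M * (1 - a⁻¹)⁻¹) := by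
      rw [norm_smul lam⁻¹ S, norm_inv, ← ha]
      exact mul_le_mul_of_nonneg_left hSnorm hq0
    have h3 : (a - 1) * ‖lam⁻¹ • S‖ ≤ (a - 1) * (a⁻¹ * (M * (1 - a⁻¹)⁻¹)) :=
      mul_le_mul_of_nonneg_left hRn (by linarith)
    have hne1 : (1 : ℝ) - a⁻¹ ≠ 0 := by
      have : (0 : ℝ) < 1 - a⁻¹ := by linarith
      exact ne_of_gt this
    have hne2 : a - 1 ≠ 0 := ne_of_gt (by linarith)
    have h4 : (a - 1) * (a⁻¹ * (M * (1 - a⁻¹)⁻¹)) = M := by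
      rw [show (1 : ℝ) - a⁻¹ = (a - 1) * a⁻¹ by field_simp]
      rw [mul_inv, inv_inv]
      field_simp
    linarith [h3, h4.le, h4.ge]

private lemma rpow_add_le (a b α : ℝ) (ha : 0 ≤ a) (hb : 0 ≤ b) (hα : 0 ≤ α) :
    (a + b) ^ α ≤ 2 ^ α * (a ^ α + b ^ α) := by
  have h1 : a + b ≤ 2 * max a b := by
    rcases le_total a b with h | h
    · rw [max_eq_right h]; linarith
    · rw [max_eq_left h]; linarith
  calc (a + b) ^ α ≤ (2 * max a b) ^ α :=
        Real.rpow_le_rpow (by linarith) h1 hα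
    _ = 2 ^ α * (max a b) ^ α :=
        Real.mul_rpow (by norm_num) (le_max_iff.2 (Or.inl ha))
    _ ≤ 2 ^ α * (a ^ α + b ^ α) := by
        apply mul_le_mul_of_nonneg_left _ (Real.rpow_nonneg (by norm_num) _)
        rcases le_total a b with h | h
        · rw [max_eq_right h]
          nlinarith [Real.rpow_nonneg ha α]
        · rw [max_eq_left h]
          nlinarith [Real.rpow_nonneg hb α]

/-- Polynomial resolvent bound extends from the unit circle into the annulus 1 ≤ r ≤ 2. -/
theorem stmt11 {X : Type*} [NormedAddCommGroup X] [NormedSpace ℂ X] [CompleteSpace X]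
    (A : X →L[ℂ] X) (M : ℝ) (hM0 : 0 ≤ M) (hM : ∀ n : ℕ, ‖A ^ n‖ ≤ M)
    (φk α MA εA : ℝ) (hα : 1 ≤ α) (hMA : 1 ≤ MA) (hεA0 : 0 < εA) (hεA : εA ≤ Real.pi / 8)
    (hres : ∀ φ : ℝ, 0 < |φ - φk| → |φ - φk| ≤ εA →
      ∃ R : X →L[ℂ] X,
        R * (Complex.exp ((φ : ℂ) * Complex.I) • (1 : X →L[ℂ] X) - A) = 1 ∧
        (Complex.exp ((φ : ℂ) * Complex.I) • (1 : X →L[ℂ] X) - A) * R = 1 ∧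
        |φ - φk| ^ α * ‖R‖ ≤ MA) :
    ∀ r φ : ℝ, 1 ≤ r → r ≤ 2 → 0 < |φ - φk| → |φ - φk| ≤ εA →
      (r : ℂ) * Complex.exp ((φ : ℂ) * Complex.I) ≠ Complex.exp ((φk : ℂ) * Complex.I) →
      ∃ R : X →L[ℂ] X,
        R * (((r : ℂ) * Complex.exp ((φ : ℂ) * Complex.I)) • (1 : X →L[ℂ] X) - A) = 1 ∧
        (((r : ℂ) * Complex.exp ((φ : ℂ) * Complex.I)) • (1 : X →L[ℂ] X) - A) * R = 1 ∧
        ‖(r : ℂ) * Complex.exp ((φ : ℂ) * Complex.I)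
            - Complex.exp ((φk : ℂ) * Complex.I)‖ ^ α * ‖R‖
          ≤ 2 ^ α * (M + MA * (1 + M)) := by
  intro r φ hr1 hr2 ht0 htε hne
  have hα0 : (0 : ℝ) ≤ α := by linarith
  set t : ℝ := |φ - φk| with htdef
  obtain ⟨Rμ, hμ1, hμ2, hμ3⟩ := hres φ ht0 htε
  have hchord : ‖Complex.exp ((φ : ℂ) * Complex.I)
      - Complex.exp ((φk : ℂ) * Complex.I)‖ ≤ t := chord φ φk
  have h2α : (1 : ℝ) ≤ 2 ^ α := Real.one_le_rpow (by norm_num) hα0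
  have h2α0 : (0 : ℝ) ≤ 2 ^ α := by linarith
  rcases eq_or_lt_of_le hr1 with h1 | h1
  · -- r = 1
    subst h1
    refine ⟨Rμ, ?_, ?_, ?_⟩
    · simpa using hμ1
    · simpa using hμ2
    · have hd : ‖((1 : ℝ) : ℂ) * Complex.exp ((φ : ℂ) * Complex.I)
          - Complex.exp ((φk : ℂ) * Complex.I)‖ ≤ t := by
        simpa using hchord
      have hdα : ‖((1 : ℝ) : ℂ) * Complex.exp ((φ : ℂ) * Complex.I)
          - Complex.exp ((φk : ℂ) * Complex.I)‖ ^ α ≤ t ^ α :=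
        Real.rpow_le_rpow (norm_nonneg _) hd hα0
      have hMApos : MA ≤ M + MA * (1 + M) := by nlinarith
      calc ‖((1 : ℝ) : ℂ) * Complex.exp ((φ : ℂ) * Complex.I)
            - Complex.exp ((φk : ℂ) * Complex.I)‖ ^ α * ‖Rμ‖
          ≤ t ^ α * ‖Rμ‖ := mul_le_mul_of_nonneg_right hdα (norm_nonneg _)
        _ ≤ MA := hμ3
        _ ≤ 1 * (M + MA * (1 + M)) := by linarith
        _ ≤ 2 ^ α * (M + MA * (1 + M)) :=
            mul_le_mul_of_nonneg_right h2α (by nlinarith)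
  · -- 1 < r
    set lam : ℂ := (r : ℂ) * Complex.exp ((φ : ℂ) * Complex.I) with hlam
    set mu : ℂ := Complex.exp ((φ : ℂ) * Complex.I) with hmu
    have habs_lam : ‖lam‖ = r := by
      rw [hlam, norm_mul, Complex.norm_real, Real.norm_eq_abs, Complex.norm_exp_ofReal_mul_I, mul_one,
        abs_of_pos (by linarith)]
    obtain ⟨Rl, hl1, hl2, hl3⟩ := neumann A M hM lam (by rw [habs_lam]; exact h1)
    have hKreiss : (r - 1) * ‖Rl‖ ≤ M := by rwa [habs_lam] at hl3
    -- the resolvent identity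
    have hLsplit : lam • (1 : X →L[ℂ] X) - A
        = (mu • (1 : X →L[ℂ] X) - A) + (lam - mu) • (1 : X →L[ℂ] X) := by
      rw [sub_smul]; abel
    have key : Rμ = Rl + (lam - mu) • (Rμ * Rl) := by
      have h0 : Rμ * ((lam • (1 : X →L[ℂ] X) - A) * Rl) = Rμ := by rw [hl2, mul_one]
      rw [hLsplit] at h0
      calc Rμ = Rμ * (((mu • (1 : X →L[ℂ] X) - A) + (lam - mu) • 1) * Rl) := h0.symm
        _ = (Rμ * (mu • (1 : X →L[ℂ] X) - A)) * Rl + (lam - mu) • (Rμ * Rl) := by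
            simp only [add_mul, mul_add, smul_mul_assoc, one_mul, mul_smul_comm, mul_assoc]
        _ = Rl + (lam - mu) • (Rμ * Rl) := by rw [hμ1, one_mul]
    have habsdiff : ‖lam - mu‖ = r - 1 := by
      have h : lam - mu = (((r - 1 : ℝ)) : ℂ) * mu := by
        rw [hlam, hmu]; push_cast; ring
      rw [h, norm_mul, Complex.norm_real, Real.norm_eq_abs, Complex.norm_exp_ofReal_mul_I, mul_one,
        abs_of_pos (by linarith)]
    have hRlμ : ‖Rl‖ ≤ ‖Rμ‖ * (1 + M) := by
      have h0 : Rl = Rμ - (lam - mu) • (Rμ * Rl) := eq_sub_of_add_eq key.symm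
      have h1' : ‖Rl‖ ≤ ‖Rμ‖ + (r - 1) * (‖Rμ‖ * ‖Rl‖) := by
        calc ‖Rl‖ = ‖Rμ - (lam - mu) • (Rμ * Rl)‖ := congrArg norm h0
          _ ≤ ‖Rμ‖ + ‖(lam - mu) • (Rμ * Rl)‖ := norm_sub_le _ _
          _ ≤ ‖Rμ‖ + (r - 1) * (‖Rμ‖ * ‖Rl‖) := by
              rw [norm_smul (lam - mu) (Rμ * Rl), habsdiff]
              exact add_le_add_right (mul_le_mul_of_nonneg_left (norm_mul_le _ _)
                (by linarith)) _
      nlinarith [norm_nonneg Rμ, norm_nonneg Rl, hKreiss]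
    refine ⟨Rl, hl1, hl2, ?_⟩
    set d : ℝ := ‖lam - Complex.exp ((φk : ℂ) * Complex.I)‖ with hd
    have hd0 : 0 ≤ d := norm_nonneg _
    have ht0' : 0 ≤ t := le_of_lt ht0
    have htriangle : d ≤ (r - 1) + t := by
      calc d ≤ ‖lam - mu‖
            + ‖mu - Complex.exp ((φk : ℂ) * Complex.I)‖ :=
            norm_sub_le_norm_sub_add_norm_sub _ _ _
        _ ≤ (r - 1) + t := by rw [habsdiff]; exact add_le_add_right hchord _
    have e1 : d ^ α ≤ 2 ^ α * ((r - 1) + t ^ α) := by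
      have k1 : d ^ α ≤ ((r - 1) + t) ^ α :=
        Real.rpow_le_rpow hd0 htriangle hα0
      have k2 : ((r - 1) + t) ^ α ≤ 2 ^ α * ((r - 1) ^ α + t ^ α) :=
        rpow_add_le _ _ _ (by linarith) ht0' hα0
      have k3 : (r - 1) ^ α ≤ r - 1 := by
        have := Real.rpow_le_rpow_of_exponent_ge (by linarith : (0:ℝ) < r - 1)
          (by linarith : r - 1 ≤ 1) hα
        rwa [Real.rpow_one] at this
      have k4 : 2 ^ α * ((r - 1) ^ α + t ^ α) ≤ 2 ^ α * ((r - 1) + t ^ α) :=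
        mul_le_mul_of_nonneg_left (by linarith) h2α0
      linarith
    have e2 : t ^ α * ‖Rl‖ ≤ MA * (1 + M) := by
      calc t ^ α * ‖Rl‖ ≤ t ^ α * (‖Rμ‖ * (1 + M)) :=
            mul_le_mul_of_nonneg_left hRlμ (Real.rpow_nonneg ht0' _)
        _ = (t ^ α * ‖Rμ‖) * (1 + M) := by ring
        _ ≤ MA * (1 + M) := mul_le_mul_of_nonneg_right hμ3 (by linarith)
    calc d ^ α * ‖Rl‖ ≤ (2 ^ α * ((r - 1) + t ^ α)) * ‖Rl‖ :=
          mul_le_mul_of_nonneg_right e1 (norm_nonneg _)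
      _ = 2 ^ α * ((r - 1) * ‖Rl‖ + t ^ α * ‖Rl‖) := by ring
      _ ≤ 2 ^ α * (M + MA * (1 + M)) :=
          mul_le_mul_of_nonneg_left (add_le_add hKreiss e2) h2α0
end
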